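/- For every ψ > 0, the inequality ψ² · (sqrt(1 + ψ²) · log((1 + sqrt(1 + ψ²))/ψ) − 1) ≤ 1 holds. -/

import Mathlib

open Matrix

theorem Matrix.isHermitian_transpose_mul_self {m n α : Type*} [Fintype m]
    [CommSemiring α] [StarRing α] [TrivialStar α] (A : Matrix m n α) :
    (Aᵀ * A).IsHermitian := by
  rw [IsHermitian, conjTranspose_eq_transpose_of_trivial, transpose_mul, transpose_transpose]

noncomputable def frobNorm {m n : ℕ} (A : Matrix (Fin m) (Fin n) ℝ) : ℝ :=
  Real.sqrt (∑ i, ∑ j, (A i j) ^ 2)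

noncomputable def specNorm {m n : ℕ} (A : Matrix (Fin m) (Fin n) ℝ) : ℝ :=
  ‖(Matrix.toEuclideanLin A).toContinuousLinearMap‖

/-- The `j`-th largest singular value of `A` (0-indexed). -/
noncomputable def sv {m n : ℕ} (A : Matrix (Fin m) (Fin n) ℝ) (j : Fin n) : ℝ :=
  Real.sqrt
    (((Matrix.isHermitian_transpose_mul_self A).eigenvalues ∘
        Tuple.sort (Matrix.isHermitian_transpose_mul_self A).eigenvalues)
      j.rev)

theorem stmt18 (ψ : ℝ) (hψ : 0 < ψ) :
    ψ ^ 2 * (Real.sqrt (1 + ψ ^ 2) *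
      Real.log ((1 + Real.sqrt (1 + ψ ^ 2)) / ψ) - 1) ≤ 1 := by
  set s := Real.sqrt (1 + ψ ^ 2) with hs
  have hs2 : s ^ 2 = 1 + ψ ^ 2 := Real.sq_sqrt (by positivity)
  have hs0 : 0 ≤ s := Real.sqrt_nonneg _
  have hlog : Real.log ((1 + s) / ψ) = Real.arsinh (1 / ψ) := by
    rw [Real.arsinh]
    congr 1
    have : Real.sqrt (1 + (1/ψ)^2) = s / ψ := by
      rw [hs, show (1:ℝ) + (1/ψ)^2 = (1 + ψ^2)/ψ^2 by field_simp; ring,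
        Real.sqrt_div' _ (by positivity), Real.sqrt_sq hψ.le]
    rw [this]
    field_simp
  have harsinh : Real.arsinh (1 / ψ) ≤ 1 / ψ := by
    rw [← Real.sinh_le_sinh, Real.sinh_arsinh]
    exact (Real.self_le_sinh_iff.mpr (by positivity))
  have h1 : ψ * s ≤ 1 + ψ ^ 2 := by nlinarith [sq_nonneg (s - ψ)]
  rw [hlog]
  have : ψ ^ 2 * (s * Real.arsinh (1/ψ) - 1) ≤ ψ ^ 2 * (s * (1/ψ) - 1) := by
    gcongr
  calc ψ ^ 2 * (s * Real.arsinh (1/ψ) - 1) ≤ ψ ^ 2 * (s * (1/ψ) - 1) := this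
    _ = ψ * s - ψ ^ 2 := by field_simp
    _ ≤ 1 := by nlinarith
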